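/- (Theorem 3) Let N ≥ 1, m ≥ 2 with gcd(N, m) = 1, and let A, B be subsets of ℤ_N with iv(A) = iv(B). In ℤ_{Nm}, let Ã = {m·ā + j : a ∈ A, 0 ≤ j ≤ m−1} ⊆ ℤ_{Nm}, where ā denotes the representative of a in {0,…,N−1}, and define B̃ analogously from B. Then Ã and B̃ are homometric in ℤ_{Nm}: iv(Ã) = iv(B̃). -/
import Mathlib

open Finset

/-- The interval vector of a finite subset `A` of `ℤ_M`:
`iv A n = #{(a, b) ∈ A × A : b - a = n}`. -/
def iv {M : ℕ} (A : Finset (ZMod M)) (n : ZMod M) : ℕ :=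
  ((A ×ˢ A).filter (fun p => p.2 - p.1 = n)).card

/-- The lift of `A ⊆ ℤ_N` to `ℤ_{Nm}` by multiplication and transposition:
`Ã = {m·ā + j : a ∈ A, 0 ≤ j ≤ m−1}`, where `ā` is the canonical
representative of `a` in `{0, …, N−1}`. -/
def mulLift (N m : ℕ) (A : Finset (ZMod N)) : Finset (ZMod (N * m)) :=
  (A ×ˢ Finset.range m).image
    (fun p => ((m : ZMod (N * m)) * (p.1.val : ZMod (N * m)) + (p.2 : ZMod (N * m))))

section aux

variable {N m : ℕ}

private def cfun (N m : ℕ) (n : ZMod (N * m)) (d : ZMod N) : ℕ :=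
  ((Finset.range m ×ˢ Finset.range m).filter
    (fun jj => (m : ZMod (N * m)) * ((d.val : ℕ) : ZMod (N * m))
      + (jj.2 : ZMod (N * m)) - (jj.1 : ZMod (N * m)) = n)).card

private def fm (N m : ℕ) (p : ZMod N × ℕ) : ZMod (N * m) :=
  (m : ZMod (N * m)) * (p.1.val : ZMod (N * m)) + (p.2 : ZMod (N * m))

private lemma fm_val (hN : 1 ≤ N) (p : ZMod N × ℕ) (hp : p.2 < m) :
    (fm N m p).val = m * p.1.val + p.2 := by
  haveI : NeZero N := ⟨by omega⟩
  haveI : NeZero (N * m) := ⟨Nat.mul_ne_zero (by omega) (by omega)⟩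
  have h1 : fm N m p = ((m * p.1.val + p.2 : ℕ) : ZMod (N * m)) := by
    unfold fm; push_cast; ring
  rw [h1, ZMod.val_natCast, Nat.mod_eq_of_lt]
  have hv : p.1.val < N := ZMod.val_lt p.1
  calc m * p.1.val + p.2 < m * p.1.val + m := by omega
    _ = m * (p.1.val + 1) := by ring
    _ ≤ m * N := Nat.mul_le_mul_left m (by omega)
    _ = N * m := by ring

private lemma fm_inj (hN : 1 ≤ N) (p q : ZMod N × ℕ)
    (hp : p.2 < m) (hq : q.2 < m) (h : fm N m p = fm N m q) : p = q := by
  haveI : NeZero N := ⟨by omega⟩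
  have h2 : m * p.1.val + p.2 = m * q.1.val + q.2 := by
    rw [← fm_val hN p hp, ← fm_val hN q hq, h]
  have hj : p.2 = q.2 := by
    have := congrArg (· % m) h2
    simpa [Nat.mul_add_mod, Nat.mod_eq_of_lt hp, Nat.mod_eq_of_lt hq] using this
  have hv : p.1.val = q.1.val := by
    have h3 := congrArg (· / m) h2
    have e1 : p.2 / m = 0 := Nat.div_eq_of_lt hp
    have e2 : q.2 / m = 0 := Nat.div_eq_of_lt hq
    simp only [Nat.mul_add_div (by omega : 0 < m), e1, e2] at h3
    omega
  exact Prod.ext (ZMod.val_injective N hv) hj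

/-- `m·b̄ − m·ā ≡ m·(b−a)̄ (mod Nm)`. -/
private lemma key_sub (hN : 1 ≤ N) (a b : ZMod N) :
    (m : ZMod (N * m)) * (b.val : ZMod (N * m)) - (m : ZMod (N * m)) * (a.val : ZMod (N * m))
      = (m : ZMod (N * m)) * (((b - a).val : ℕ) : ZMod (N * m)) := by
  haveI : NeZero N := ⟨by omega⟩
  have hdvd : (N : ℤ) ∣ ((b.val : ℤ) - (a.val : ℤ) - ((b - a).val : ℤ)) := by
    rw [← ZMod.intCast_zmod_eq_zero_iff_dvd]
    push_cast
    rw [ZMod.natCast_val, ZMod.natCast_val, ZMod.natCast_val, ZMod.cast_id, ZMod.cast_id,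
      ZMod.cast_id]
    ring
  have hdvd2 : ((N * m : ℕ) : ℤ) ∣ (m : ℤ) * ((b.val : ℤ) - (a.val : ℤ) - ((b - a).val : ℤ)) := by
    obtain ⟨k, hk⟩ := hdvd
    exact ⟨k, by push_cast; rw [hk]; ring⟩
  have h0 : (((m : ℤ) * ((b.val : ℤ) - (a.val : ℤ) - ((b - a).val : ℤ)) : ℤ) : ZMod (N * m)) = 0 :=
    (ZMod.intCast_zmod_eq_zero_iff_dvd _ _).mpr hdvd2
  push_cast at h0
  linear_combination h0

/-- The main computation: `iv (mulLift N m A)` is a linear function of `iv A`. -/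
private lemma iv_mulLift [NeZero N] (hN : 1 ≤ N) (hm : 1 ≤ m)
    (A : Finset (ZMod N)) (n : ZMod (N * m)) :
    iv (mulLift N m A) n = ∑ d : ZMod N, iv A d * cfun N m n d := by
  classical
  have hml : mulLift N m A = (A ×ˢ Finset.range m).image (fm N m) := rfl
  -- product of images is image of product
  have hprod : (mulLift N m A) ×ˢ (mulLift N m A)
      = ((A ×ˢ Finset.range m) ×ˢ (A ×ˢ Finset.range m)).image
          (Prod.map (fm N m) (fm N m)) := by
    rw [hml]; ext ⟨x1, x2⟩
    simp only [mem_product, mem_image, Prod.exists, Prod.map, Prod.mk.injEq]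
    aesop
  have hfilter : (((A ×ˢ Finset.range m) ×ˢ (A ×ˢ Finset.range m)).filter
        (fun a => (Prod.map (fm N m) (fm N m) a).2 - (Prod.map (fm N m) (fm N m) a).1 = n))
      = (((A ×ˢ Finset.range m) ×ˢ (A ×ˢ Finset.range m)).filter
        (fun q => fm N m q.2 - fm N m q.1 = n)) := by
    apply Finset.filter_congr
    intro x _
    simp [Prod.map]
  have hinj : Set.InjOn (Prod.map (fm N m) (fm N m))
      ↑(((A ×ˢ Finset.range m) ×ˢ (A ×ˢ Finset.range m)).filter
        (fun a => (Prod.map (fm N m) (fm N m) a).2 - (Prod.map (fm N m) (fm N m) a).1 = n)) := by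
    intro u hu v hv huv
    simp only [coe_filter, Set.mem_setOf_eq, mem_product, mem_range, Finset.mem_coe] at hu hv
    obtain ⟨⟨⟨_, hu2⟩, _, hu4⟩, _⟩ := hu
    obtain ⟨⟨⟨_, hv2⟩, _, hv4⟩, _⟩ := hv
    have h1 := congrArg Prod.fst huv
    have h2 := congrArg Prod.snd huv
    simp only [Prod.map] at h1 h2
    exact Prod.ext (fm_inj hN _ _ hu2 hv2 h1) (fm_inj hN _ _ hu4 hv4 h2)
  have step1 : iv (mulLift N m A) n
      = (((A ×ˢ Finset.range m) ×ˢ (A ×ˢ Finset.range m)).filter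
          (fun q => fm N m q.2 - fm N m q.1 = n)).card := by
    unfold iv
    rw [hprod, Finset.filter_image, Finset.card_image_of_injOn hinj, hfilter]
  rw [step1]
  -- turn into a quadruple sum
  rw [Finset.card_filter, Finset.sum_product]
  have step2 : ∀ u ∈ A ×ˢ Finset.range m,
      ∑ v ∈ A ×ˢ Finset.range m, (if fm N m v - fm N m u = n then 1 else 0)
      = ∑ b ∈ A, ∑ j' ∈ Finset.range m, (if fm N m (b, j') - fm N m u = n then 1 else 0) := by
    intro u _; rw [Finset.sum_product]
  rw [Finset.sum_congr rfl step2, Finset.sum_product]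
  -- rewrite the condition using key_sub
  have hcond : ∀ (a b : ZMod N) (j j' : ℕ),
      (fm N m (b, j') - fm N m (a, j) = n) ↔
      ((m : ZMod (N * m)) * (((b - a).val : ℕ) : ZMod (N * m))
        + (j' : ZMod (N * m)) - (j : ZMod (N * m)) = n) := by
    intro a b j j'
    unfold fm
    constructor <;> intro hh
    · linear_combination hh - key_sub (m := m) hN a b
    · linear_combination hh + key_sub (m := m) hN a b
  calc ∑ a ∈ A, ∑ j ∈ Finset.range m, ∑ b ∈ A, ∑ j' ∈ Finset.range m,
        (if fm N m (b, j') - fm N m (a, j) = n then 1 else 0)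
      = ∑ a ∈ A, ∑ b ∈ A, ∑ j ∈ Finset.range m, ∑ j' ∈ Finset.range m,
        (if (m : ZMod (N * m)) * (((b - a).val : ℕ) : ZMod (N * m))
          + (j' : ZMod (N * m)) - (j : ZMod (N * m)) = n then 1 else 0) := by
        refine Finset.sum_congr rfl (fun a ha => ?_)
        rw [Finset.sum_comm]
        refine Finset.sum_congr rfl (fun b hb => ?_)
        refine Finset.sum_congr rfl (fun j hj => ?_)
        refine Finset.sum_congr rfl (fun j' hj' => ?_)
        rw [if_congr (hcond a b j j') rfl rfl]
    _ = ∑ a ∈ A, ∑ b ∈ A, cfun N m n (b - a) := by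
        refine Finset.sum_congr rfl (fun a _ => Finset.sum_congr rfl (fun b _ => ?_))
        unfold cfun
        rw [Finset.card_filter, Finset.sum_product]
    _ = ∑ p ∈ A ×ˢ A, cfun N m n (p.2 - p.1) := by rw [Finset.sum_product]
    _ = ∑ d : ZMod N, ∑ p ∈ (A ×ˢ A).filter (fun p => p.2 - p.1 = d), cfun N m n (p.2 - p.1) :=
        (Finset.sum_fiberwise (A ×ˢ A) (fun p => p.2 - p.1) (fun p => cfun N m n (p.2 - p.1))).symm
    _ = ∑ d : ZMod N, iv A d * cfun N m n d := by
        refine Finset.sum_congr rfl (fun d _ => ?_)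
        have hcc : ∀ p ∈ (A ×ˢ A).filter (fun p => p.2 - p.1 = d),
            cfun N m n (p.2 - p.1) = cfun N m n d := fun p hp => by
          rw [(Finset.mem_filter.mp hp).2]
        rw [Finset.sum_congr rfl hcc, Finset.sum_const, smul_eq_mul]
        rfl

end aux

/-- (Theorem 3) If `A Z_N B` and `gcd(N, m) = 1`, `m ≥ 2`, then
`(M_m A ∪ T_1 M_m A ∪ ⋯ ∪ T_{m−1} M_m A) Z_{Nm} (M_m B ∪ ⋯ ∪ T_{m−1} M_m B)`. -/
theorem homometric_mulLift (N m : ℕ) (hN : 1 ≤ N) (hm : 2 ≤ m)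
    (hco : Nat.gcd N m = 1) (A B : Finset (ZMod N)) (h : iv A = iv B) :
    iv (mulLift N m A) = iv (mulLift N m B) := by
  haveI : NeZero N := ⟨by omega⟩
  funext n
  rw [iv_mulLift hN (by omega) A n, iv_mulLift hN (by omega) B n, h]
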